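/- Define T(α_L) = 2A + (ln α_L)²·A² − ln(α_L)·A·√((ln α_L)²·A² + 8A) for A > 0 and α_L ∈ (0,1]. Then T is strictly decreasing in α_L on (0,1), T(1) = 2A, and consequently T(α_L) > 2A for all α_L ∈ (0,1). -/
import Mathlib


open Real Set

theorem T_strictly_decreasing (A : ℝ) (hA : 0 < A) :
    let T : ℝ → ℝ := fun αL =>
      2 * A + (Real.log αL) ^ 2 * A ^ 2 -
        Real.log αL * A * Real.sqrt ((Real.log αL) ^ 2 * A ^ 2 + 8 * A)
    StrictAntiOn T (Set.Ioo (0 : ℝ) 1) ∧ T 1 = 2 * A ∧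
      ∀ αL ∈ Set.Ioo (0 : ℝ) 1, T αL > 2 * A := by
  intro T
  have key : ∀ u v : ℝ, 0 < u → u < v →
      u^2*A^2 + u*A*Real.sqrt (u^2*A^2+8*A) < v^2*A^2 + v*A*Real.sqrt (v^2*A^2+8*A) := by
    intro u v hu huv
    have hv : 0 < v := hu.trans huv
    have h1 : u^2*A^2 < v^2*A^2 := by
      have : u^2 < v^2 := by nlinarith
      exact mul_lt_mul_of_pos_right this (by positivity)
    have hs : Real.sqrt (u^2*A^2+8*A) < Real.sqrt (v^2*A^2+8*A) := by
      apply Real.sqrt_lt_sqrt (by positivity) (by nlinarith)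
    have hsp : 0 < Real.sqrt (u^2*A^2+8*A) := Real.sqrt_pos.mpr (by positivity)
    have h2 : u*A*Real.sqrt (u^2*A^2+8*A) < v*A*Real.sqrt (v^2*A^2+8*A) :=
      mul_lt_mul (mul_lt_mul_of_pos_right huv hA) hs.le hsp (by positivity)
    linarith
  have hT : ∀ αL : ℝ, T αL = 2*A + ((-Real.log αL)^2*A^2 +
      (-Real.log αL)*A*Real.sqrt ((-Real.log αL)^2*A^2+8*A)) := by
    intro αL
    show 2 * A + (Real.log αL) ^ 2 * A ^ 2 -
        Real.log αL * A * Real.sqrt ((Real.log αL) ^ 2 * A ^ 2 + 8 * A) = _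
    have : (-Real.log αL)^2 = (Real.log αL)^2 := by ring
    rw [this]; ring
  refine ⟨?_, ?_, ?_⟩
  · intro x hx y hy hxy
    have hlx : Real.log x < 0 := Real.log_neg hx.1 hx.2
    have hly : Real.log y < 0 := Real.log_neg hy.1 hy.2
    have hlxy : Real.log x < Real.log y := Real.log_lt_log hx.1 hxy
    have := key (-Real.log y) (-Real.log x) (by linarith) (by linarith)
    rw [hT x, hT y]
    linarith
  · show 2 * A + (Real.log 1) ^ 2 * A ^ 2 -
        Real.log 1 * A * Real.sqrt ((Real.log 1) ^ 2 * A ^ 2 + 8 * A) = 2 * A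
    simp
  · intro αL hαL
    have hl : Real.log αL < 0 := Real.log_neg hαL.1 hαL.2
    rw [hT αL]
    have hs := Real.sqrt_nonneg ((-Real.log αL)^2*A^2+8*A)
    nlinarith [mul_pos (mul_pos (by linarith : (0:ℝ) < -Real.log αL) hA) (Real.sqrt_pos.mpr (show (0:ℝ) < (-Real.log αL)^2*A^2+8*A by positivity))]
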